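/- Consider the subset-sum gadget SBMDP built from n ≥ 1, nonnegative weights m : Fin n → ℝ and discount factor γ ∈ (0,1), and let Σ := ∑ i, m i. There exists a pure policy π with v↓(π)(q 0) ≥ Σ/2 and v̄(π)(q 0) ≥ (3/2) * Σ if and only if there exists a set I ⊆ Fin n with ∑ i ∈ I, m i = Σ/2. -/

import Mathlib

/-- States of the subset-sum gadget SBMDP: an absorbing state `t` and,
for each `i : Fin n`, the four states `q i`, `sbar i`, `sdn i` (= s↓ i),
`sup i` (= s↑ i). -/
inductive GState (n : ℕ) where
  | q : Fin n → GState n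
  | sbar : Fin n → GState n
  | sdn : Fin n → GState n
  | sup : Fin n → GState n
  | t : GState n
  deriving DecidableEq, Fintype

/-- The two actions of the gadget. -/
inductive GAct where
  | a | b
  deriving DecidableEq

instance instFintypeGAct : Fintype GAct :=
  ⟨{GAct.a, GAct.b}, fun x => by cases x <;> simp⟩

namespace GState

/-- Successor of stage `i`: `q (i+1)` if it exists, otherwise the absorbing state `t`. -/
def nxt {n : ℕ} (i : Fin n) : GState n :=
  if h : (i : ℕ) + 1 < n then GState.q ⟨(i : ℕ) + 1, h⟩ else GState.t

/-- Dirac (indicator) probability row concentrated on `s`. -/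
def ind {n : ℕ} (s : GState n) : GState n → ℝ :=
  fun t' => if t' = s then 1 else 0

/-- Lower transition-probability bounds of the gadget. -/
def lo {n : ℕ} : GState n → GAct → GState n → ℝ
  | .q i, .a => ind (.sbar i)
  | .q _, .b => fun _ => 0
  | .sbar i, _ => ind (nxt i)
  | .sdn i, _ => ind (nxt i)
  | .sup i, _ => ind (nxt i)
  | .t, _ => ind .t

/-- Upper transition-probability bounds of the gadget. -/
def hi {n : ℕ} : GState n → GAct → GState n → ℝ
  | .q i, .a => ind (.sbar i)
  | .q i, .b => fun t' => if t' = GState.sdn i ∨ t' = GState.sup i then 1 else 0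
  | .sbar i, _ => ind (nxt i)
  | .sdn i, _ => ind (nxt i)
  | .sup i, _ => ind (nxt i)
  | .t, _ => ind .t

/-- Average transition probabilities of the gadget. -/
noncomputable def avg {n : ℕ} : GState n → GAct → GState n → ℝ
  | .q i, .a => ind (.sbar i)
  | .q i, .b => fun t' => if t' = GState.sdn i ∨ t' = GState.sup i then 1 / 2 else 0
  | .sbar i, _ => ind (nxt i)
  | .sdn i, _ => ind (nxt i)
  | .sup i, _ => ind (nxt i)
  | .t, _ => ind .t

/-- State-based (certain) rewards of the gadget, with `k i = 2 i + 1`. -/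
noncomputable def rew {n : ℕ} (m : Fin n → ℝ) (γ : ℝ) : GState n → ℝ
  | .q _ => 0
  | .t => 0
  | .sdn _ => 0
  | .sbar i => m i / γ ^ (2 * (i : ℕ) + 1)
  | .sup i => 4 * m i / γ ^ (2 * (i : ℕ) + 1)

end GState

namespace SSAux
open GState

variable {n : ℕ}

lemma ind_sum (s : GState n) : ∑ t', GState.ind s t' = 1 := by
  simp [GState.ind]

lemma ind_dot (v : GState n → ℝ) (s : GState n) : ∑ t', GState.ind s t' * v t' = v s := by
  simp [GState.ind]

lemma dirac_set (v : GState n → ℝ) (s' : GState n) :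
    {x | ∃ p : GState n → ℝ,
      ((∀ t', GState.ind s' t' ≤ p t' ∧ p t' ≤ GState.ind s' t') ∧ ∑ t', p t' = 1) ∧
        x = ∑ t', p t' * v t'} = {v s'} := by
  ext x
  constructor
  · rintro ⟨p, ⟨hb, -⟩, rfl⟩
    have hp : p = GState.ind s' := funext fun t' => le_antisymm (hb t').2 (hb t').1
    simp [hp, ind_dot]
  · rintro rfl
    exact ⟨GState.ind s', ⟨fun t' => ⟨le_refl _, le_refl _⟩, ind_sum s'⟩, (ind_dot v s').symm⟩

lemma sdn_ne_sup (i : Fin n) : (GState.sdn i : GState n) ≠ GState.sup i := by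
  intro h; cases h

lemma pair_sum (i : Fin n) (g : GState n → ℝ)
    (hz : ∀ t', t' ≠ GState.sdn i → t' ≠ GState.sup i → g t' = 0) :
    ∑ t', g t' = g (GState.sdn i) + g (GState.sup i) := by
  rw [← Finset.sum_pair (sdn_ne_sup i)]
  exact (Finset.sum_subset (Finset.subset_univ _) (by
    intro x _ hx
    simp only [Finset.mem_insert, Finset.mem_singleton] at hx
    push_neg at hx
    exact hz x hx.1 hx.2)).symm

lemma b_inf (v : GState n → ℝ) (i : Fin n) (hle : v (GState.sdn i) ≤ v (GState.sup i)) :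
    sInf {x | ∃ p : GState n → ℝ,
      ((∀ t', GState.lo (GState.q i) GAct.b t' ≤ p t' ∧ p t' ≤ GState.hi (GState.q i) GAct.b t') ∧
        ∑ t', p t' = 1) ∧ x = ∑ t', p t' * v t'} = v (GState.sdn i) := by
  apply IsLeast.csInf_eq
  constructor
  · refine ⟨GState.ind (GState.sdn i), ⟨fun t' => ⟨?_, ?_⟩, ind_sum _⟩, (ind_dot v _).symm⟩
    · simp only [GState.lo, GState.ind]
      split <;> norm_num
    · simp only [GState.hi, GState.ind]
      split
      · rename_i h; simp [h]
      · split <;> norm_num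
  · rintro x ⟨p, ⟨hb, hs⟩, rfl⟩
    have h0 : ∀ t', (0:ℝ) ≤ p t' := fun t' => (hb t').1
    have hz : ∀ t', t' ≠ GState.sdn i → t' ≠ GState.sup i → p t' = 0 := by
      intro t' h1 h2
      have := (hb t').2
      simp only [GState.hi, h1, h2, or_self, if_false] at this
      linarith [h0 t']
    have hps : p (GState.sdn i) + p (GState.sup i) = 1 := by
      rw [← hs]; exact (pair_sum i p hz).symm
    have hsum : ∑ t', p t' * v t' = p (GState.sdn i) * v (GState.sdn i) + p (GState.sup i) * v (GState.sup i) := by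
      apply pair_sum i (fun t' => p t' * v t')
      intro t' h1 h2; rw [hz t' h1 h2]; ring
    rw [hsum]
    have key : p (GState.sdn i) * v (GState.sdn i) + p (GState.sup i) * v (GState.sdn i)
        = v (GState.sdn i) := by rw [← add_mul, hps, one_mul]
    linarith [mul_le_mul_of_nonneg_left hle (h0 (GState.sup i))]

lemma avg_b_dot (v : GState n → ℝ) (i : Fin n) :
    ∑ t', GState.avg (GState.q i) GAct.b t' * v t'
      = (v (GState.sdn i) + v (GState.sup i)) / 2 := by
  rw [pair_sum i _ (by
    intro t' h1 h2
    simp only [GState.avg, h1, h2, or_self, if_false, zero_mul])]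
  simp only [GState.avg, sdn_ne_sup i, GState.avg]
  have h1 : (GState.sdn i : GState n) ≠ GState.sup i := sdn_ne_sup i
  have h2 : (GState.sup i : GState n) ≠ GState.sdn i := fun h => h1 h.symm
  simp [h1, h2]
  ring


lemma tail_split {n : ℕ} (f : Fin n → ℝ) (i : ℕ) (h : i < n) :
    ∑ j ∈ Finset.univ.filter (fun j : Fin n => i ≤ (j:ℕ)), f j
      = f ⟨i,h⟩ + ∑ j ∈ Finset.univ.filter (fun j : Fin n => i+1 ≤ (j:ℕ)), f j := by
  have hset : Finset.univ.filter (fun j : Fin n => i ≤ (j:ℕ))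
      = insert ⟨i,h⟩ (Finset.univ.filter (fun j : Fin n => i+1 ≤ (j:ℕ))) := by
    ext j
    simp only [Finset.mem_filter, Finset.mem_univ, true_and, Finset.mem_insert, Fin.ext_iff]
    omega
  rw [hset, Finset.sum_insert (by
    simp only [Finset.mem_filter, Finset.mem_univ, true_and]
    omega)]

lemma main_val (n : ℕ) (hn : 1 ≤ n) (m : Fin n → ℝ) (hm : ∀ i, 0 ≤ m i)
    (γ : ℝ) (hγ0 : 0 < γ) (hγ1 : γ < 1)
    (π : GState n → GAct) (vdv vbv : GState n → ℝ)
    (hvd : ∀ s : GState n,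
      vdv s = GState.rew m γ s + γ * sInf {x | ∃ p : GState n → ℝ,
        ((∀ t', GState.lo s (π s) t' ≤ p t' ∧ p t' ≤ GState.hi s (π s) t') ∧
          ∑ t', p t' = 1) ∧ x = ∑ t', p t' * vdv t'})
    (hvb : ∀ s : GState n,
      vbv s = GState.rew m γ s + γ * ∑ t', GState.avg s (π s) t' * vbv t') :
    vdv (GState.q ⟨0, hn⟩) = (∑ j, if π (GState.q j) = GAct.a then m j else 0) ∧
    vbv (GState.q ⟨0, hn⟩) = (∑ j, if π (GState.q j) = GAct.a then m j else 2 * m j) := by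
  have hγne : γ ≠ 0 := ne_of_gt hγ0
  have hdirac : ∀ s s' : GState n, GState.lo s (π s) = GState.ind s' →
      GState.hi s (π s) = GState.ind s' →
      vdv s = GState.rew m γ s + γ * vdv s' := by
    intro s s' h1 h2
    have h := hvd s
    rw [h1, h2, dirac_set, csInf_singleton] at h
    exact h
  have hbdirac : ∀ s s' : GState n, GState.avg s (π s) = GState.ind s' →
      vbv s = GState.rew m γ s + γ * vbv s' := by
    intro s s' h1
    have h := hvb s
    rw [h1, ind_dot] at h
    exact h
  -- absorbing state has value 0
  have solve0 : ∀ x : ℝ, x = γ * x → x = 0 := by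
    intro x hx
    have h1 : (1 - γ) * x = 0 := by linear_combination hx
    rcases mul_eq_zero.mp h1 with h2 | h2
    · linarith
    · exact h2
  have hdt : vdv GState.t = 0 := by
    have h := hdirac GState.t GState.t (by cases π GState.t <;> rfl)
      (by cases π GState.t <;> rfl)
    rw [show GState.rew m γ (GState.t : GState n) = 0 from rfl, zero_add] at h
    exact solve0 _ h
  have hbt : vbv GState.t = 0 := by
    have h := hbdirac GState.t GState.t (by cases π GState.t <;> rfl)
    rw [show GState.rew m γ (GState.t : GState n) = 0 from rfl, zero_add] at h
    exact solve0 _ h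
  -- deterministic middle states
  have hsbar_d : ∀ i : Fin n,
      vdv (GState.sbar i) = m i / γ^(2*(i:ℕ)+1) + γ * vdv (GState.nxt i) := by
    intro i
    have h := hdirac (GState.sbar i) (GState.nxt i) (by cases π (GState.sbar i) <;> rfl)
      (by cases π (GState.sbar i) <;> rfl)
    simpa [GState.rew] using h
  have hsdn_d : ∀ i : Fin n, vdv (GState.sdn i) = γ * vdv (GState.nxt i) := by
    intro i
    have h := hdirac (GState.sdn i) (GState.nxt i) (by cases π (GState.sdn i) <;> rfl)
      (by cases π (GState.sdn i) <;> rfl)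
    simpa [GState.rew] using h
  have hsup_d : ∀ i : Fin n,
      vdv (GState.sup i) = 4 * m i / γ^(2*(i:ℕ)+1) + γ * vdv (GState.nxt i) := by
    intro i
    have h := hdirac (GState.sup i) (GState.nxt i) (by cases π (GState.sup i) <;> rfl)
      (by cases π (GState.sup i) <;> rfl)
    simpa [GState.rew] using h
  have hsbar_b : ∀ i : Fin n,
      vbv (GState.sbar i) = m i / γ^(2*(i:ℕ)+1) + γ * vbv (GState.nxt i) := by
    intro i
    have h := hbdirac (GState.sbar i) (GState.nxt i) (by cases π (GState.sbar i) <;> rfl)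
    simpa [GState.rew] using h
  have hsdn_b : ∀ i : Fin n, vbv (GState.sdn i) = γ * vbv (GState.nxt i) := by
    intro i
    have h := hbdirac (GState.sdn i) (GState.nxt i) (by cases π (GState.sdn i) <;> rfl)
    simpa [GState.rew] using h
  have hsup_b : ∀ i : Fin n,
      vbv (GState.sup i) = 4 * m i / γ^(2*(i:ℕ)+1) + γ * vbv (GState.nxt i) := by
    intro i
    have h := hbdirac (GState.sup i) (GState.nxt i) (by cases π (GState.sup i) <;> rfl)
    simpa [GState.rew] using h
  -- q states
  have hq_d : ∀ i : Fin n, vdv (GState.q i)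
      = (if π (GState.q i) = GAct.a then m i / γ^(2*(i:ℕ)) else 0)
        + γ^2 * vdv (GState.nxt i) := by
    intro i
    cases hπ : π (GState.q i) with
    | a =>
      have h := hdirac (GState.q i) (GState.sbar i) (by rw [hπ]; rfl) (by rw [hπ]; rfl)
      rw [hsbar_d i] at h
      rw [h]
      simp only [GState.rew, if_pos rfl, eq_self_iff_true, ↓reduceIte]
      field_simp
      ring
    | b =>
      have h := hvd (GState.q i)
      rw [hπ] at h
      have hle : vdv (GState.sdn i) ≤ vdv (GState.sup i) := by
        rw [hsdn_d i, hsup_d i]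
        have : (0:ℝ) ≤ 4 * m i / γ^(2*(i:ℕ)+1) :=
          div_nonneg (by linarith [hm i]) (le_of_lt (pow_pos hγ0 _))
        linarith
      rw [b_inf vdv i hle, hsdn_d i] at h
      rw [h, if_neg (fun hc => GAct.noConfusion hc)]
      simp only [GState.rew]
      ring
  have hq_b : ∀ i : Fin n, vbv (GState.q i)
      = (if π (GState.q i) = GAct.a then m i / γ^(2*(i:ℕ)) else 2 * m i / γ^(2*(i:ℕ)))
        + γ^2 * vbv (GState.nxt i) := by
    intro i
    cases hπ : π (GState.q i) with
    | a =>
      have h := hbdirac (GState.q i) (GState.sbar i) (by rw [hπ]; rfl)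
      rw [hsbar_b i] at h
      rw [h]
      simp only [GState.rew, if_pos rfl, eq_self_iff_true, ↓reduceIte]
      field_simp
      ring
    | b =>
      have h := hvb (GState.q i)
      rw [hπ, avg_b_dot, hsdn_b i, hsup_b i] at h
      rw [h, if_neg (fun hc => GAct.noConfusion hc)]
      simp only [GState.rew]
      field_simp
      ring
  -- next-state computations
  have hnxt1 : ∀ (i : ℕ) (h : i < n) (h2 : i+1 < n),
      GState.nxt (⟨i,h⟩ : Fin n) = GState.q ⟨i+1,h2⟩ := by
    intro i h h2; simp [GState.nxt, h2]
  have hnxt2 : ∀ (i : ℕ) (h : i < n), ¬ (i+1 < n) →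
      GState.nxt (⟨i,h⟩ : Fin n) = GState.t := by
    intro i h h2; simp [GState.nxt, h2]
  -- main downward induction
  have key : ∀ k : ℕ, ∀ (i : ℕ) (h : i < n), i + k = n →
      γ^(2*i) * vdv (GState.q ⟨i,h⟩)
        = (∑ j ∈ Finset.univ.filter (fun j : Fin n => i ≤ (j:ℕ)),
            if π (GState.q j) = GAct.a then m j else 0) ∧
      γ^(2*i) * vbv (GState.q ⟨i,h⟩)
        = (∑ j ∈ Finset.univ.filter (fun j : Fin n => i ≤ (j:ℕ)),
            if π (GState.q j) = GAct.a then m j else 2 * m j) := by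
    intro k
    induction k with
    | zero => intro i h hik; omega
    | succ k ih =>
      intro i h hik
      by_cases h2 : i + 1 < n
      · obtain ⟨ihd, ihb⟩ := ih (i+1) h2 (by omega)
        constructor
        · rw [tail_split _ i h, hq_d ⟨i,h⟩, hnxt1 i h h2, ← ihd]
          simp only [Fin.val_mk]
          split_ifs
          · field_simp
            ring
          · ring
        · rw [tail_split _ i h, hq_b ⟨i,h⟩, hnxt1 i h h2, ← ihb]
          simp only [Fin.val_mk]
          split_ifs
          · field_simp
            ring
          · field_simp
            ring
      · have hempty : Finset.univ.filter (fun j : Fin n => i+1 ≤ (j:ℕ)) = ∅ := by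
          ext j
          simp only [Finset.mem_filter, Finset.mem_univ, true_and, Finset.notMem_empty,
            iff_false]
          have := j.isLt
          omega
        constructor
        · rw [tail_split _ i h, hq_d ⟨i,h⟩, hnxt2 i h h2, hdt, hempty]
          simp only [Fin.val_mk, Finset.sum_empty]
          split_ifs
          · field_simp
            ring
          · ring
        · rw [tail_split _ i h, hq_b ⟨i,h⟩, hnxt2 i h h2, hbt, hempty]
          simp only [Fin.val_mk, Finset.sum_empty]
          split_ifs
          · field_simp
            ring
          · field_simp
            ring
  obtain ⟨h1, h2⟩ := key n 0 hn (by omega)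
  have huniv : Finset.univ.filter (fun j : Fin n => 0 ≤ (j:ℕ)) = Finset.univ := by
    simp
  rw [huniv] at h1 h2
  norm_num at h1 h2
  exact ⟨h1, h2⟩

end SSAux

theorem stmt_15 (n : ℕ) (hn : 1 ≤ n) (m : Fin n → ℝ) (hm : ∀ i, 0 ≤ m i)
    (γ : ℝ) (hγ0 : 0 < γ) (hγ1 : γ < 1)
    (vd vb : (GState n → GAct) → GState n → ℝ)
    (hvd : ∀ (π : GState n → GAct) (s : GState n),
      vd π s = GState.rew m γ s + γ * sInf {x | ∃ p : GState n → ℝ,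
        ((∀ t', GState.lo s (π s) t' ≤ p t' ∧ p t' ≤ GState.hi s (π s) t') ∧
          ∑ t', p t' = 1) ∧ x = ∑ t', p t' * vd π t'})
    (hvb : ∀ (π : GState n → GAct) (s : GState n),
      vb π s = GState.rew m γ s + γ * ∑ t', GState.avg s (π s) t' * vb π t') :
    (∃ π : GState n → GAct,
      (∑ i, m i) / 2 ≤ vd π (GState.q ⟨0, hn⟩) ∧
      (3 / 2) * (∑ i, m i) ≤ vb π (GState.q ⟨0, hn⟩)) ↔
    (∃ I : Finset (Fin n), ∑ i ∈ I, m i = (∑ i, m i) / 2) := by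
  classical
  constructor
  · rintro ⟨π, hd, hb⟩
    obtain ⟨e1, e2⟩ := SSAux.main_val n hn m hm γ hγ0 hγ1 π (vd π) (vb π) (hvd π) (hvb π)
    rw [e1] at hd
    rw [e2] at hb
    have hrel : (∑ j, if π (GState.q j) = GAct.a then m j else 2 * m j)
        = 2 * (∑ j, m j) - ∑ j, (if π (GState.q j) = GAct.a then m j else 0) := by
      rw [Finset.mul_sum, ← Finset.sum_sub_distrib]
      apply Finset.sum_congr rfl
      intro j _
      split <;> ring
    rw [hrel] at hb
    refine ⟨Finset.univ.filter (fun j => π (GState.q j) = GAct.a), ?_⟩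
    rw [Finset.sum_filter]
    linarith
  · rintro ⟨I, hI⟩
    set π : GState n → GAct := fun s =>
      match s with
      | GState.q j => if j ∈ I then GAct.b else GAct.a
      | _ => GAct.a with hπdef
    obtain ⟨e1, e2⟩ := SSAux.main_val n hn m hm γ hγ0 hγ1 π (vd π) (vb π) (hvd π) (hvb π)
    have hA : ∀ j : Fin n, (if π (GState.q j) = GAct.a then m j else 0)
        = (if j ∈ I then 0 else m j) := by
      intro j
      by_cases hj : j ∈ I <;> simp [hπdef, hj]
    have hB : ∀ j : Fin n, (if π (GState.q j) = GAct.a then m j else 2 * m j)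
        = (if j ∈ I then m j else 0) + m j := by
      intro j
      by_cases hj : j ∈ I <;> simp [hπdef, hj] <;> ring
    have hIs : ∑ j, (if j ∈ I then m j else 0) = ∑ j ∈ I, m j := by
      rw [Finset.sum_ite_mem, Finset.univ_inter]
    have hAs : ∑ j, (if π (GState.q j) = GAct.a then m j else 0)
        = ∑ j, m j - ∑ j ∈ I, m j := by
      simp only [hA]
      rw [eq_sub_iff_add_eq, ← hIs, ← Finset.sum_add_distrib]
      apply Finset.sum_congr rfl
      intro j _
      split <;> ring
    have hBs : ∑ j, (if π (GState.q j) = GAct.a then m j else 2 * m j)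
        = ∑ j ∈ I, m j + ∑ j, m j := by
      simp only [hB]
      rw [Finset.sum_add_distrib, hIs]
    refine ⟨π, ?_, ?_⟩
    · rw [e1, hAs, hI]; linarith
    · rw [e2, hBs, hI]; linarith
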